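/- Let d ≥ 1, μ ∈ (0, 1), λ > 0, C₁ ≥ 0, M ≥ 0, let P be a d×d real matrix, let a : (0, ∞) → [0, ∞) be a function, let Φ : {(t, s) : 0 ≤ s ≤ t} → (d×d real matrices) be such that s ↦ Φ(t, s) is measurable for each t and ‖Φ(t, s) − P‖ ≤ C₁·e^{−λ(t−s)} + a(t) for all 0 ≤ s ≤ t (spectral norm), and let u : [0, ∞) → ℝ^d be measurable with ‖u(s)‖₂ ≤ M for all s. Then there exists a constant C > 0 such that for all t ≥ 1: ‖∫_0^t s^{μ−1}·Φ(t, s)·u(s) ds − P·∫_0^t s^{μ−1}·u(s) ds‖₂ ≤ C·(t^{μ−1} + t^μ·a(t)). -/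

import Mathlib

open MeasureTheory intervalIntegral

/-- The exponential integral `∫ exp(-(λ(t-s)))` over `[a,b]` with `b ≤ t` is at most `1/λ`. -/
lemma aux_exp_integral_le {lam t a b : ℝ} (hlam : 0 < lam) (hab : a ≤ b) (hb : b ≤ t) :
    ∫ s in a..b, Real.exp (-(lam * (t - s))) ≤ 1 / lam := by
  have hderiv : ∀ s ∈ Set.uIcc a b,
      HasDerivAt (fun x => Real.exp (-(lam * (t - x))) / lam)
        (Real.exp (-(lam * (t - s)))) s := by
    intro s _
    have h1 : HasDerivAt (fun x : ℝ => -(lam * (t - x))) lam s := by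
      have : HasDerivAt (fun x : ℝ => lam * x - lam * t) lam s := by
        simpa using ((hasDerivAt_id s).const_mul lam).sub_const (lam * t)
      exact this.congr_deriv rfl |>.congr_of_eventuallyEq
        (Filter.Eventually.of_forall fun x => by ring)
    have h2 := (h1.exp).div_const lam
    exact h2.congr_deriv (mul_div_cancel_right₀ _ hlam.ne')
  have hcont : IntervalIntegrable (fun s => Real.exp (-(lam * (t - s)))) volume a b := by
    apply Continuous.intervalIntegrable
    continuity
  rw [integral_eq_sub_of_hasDerivAt hderiv hcont]
  have h1 : Real.exp (-(lam * (t - b))) ≤ 1 := by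
    apply Real.exp_le_one_iff.mpr; nlinarith
  have h2 : 0 < Real.exp (-(lam * (t - a))) := Real.exp_pos _
  have hl : 0 < lam := hlam
  rw [div_sub_div_same]
  gcongr
  nlinarith

/-- Integrability of `s^{μ-1} exp(-(λ(t-s)))` on any subinterval of `[0,t]`. -/
lemma aux_intInt {mu lam t a b : ℝ} (hmu0 : 0 < mu) (hlam : 0 ≤ lam) (ha : a ≤ t) (hb : b ≤ t) :
    IntervalIntegrable (fun s => s ^ (mu - 1) * Real.exp (-(lam * (t - s)))) volume a b := by
  have hrpow : IntervalIntegrable (fun s : ℝ => s ^ (mu - 1)) volume a b :=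
    intervalIntegral.intervalIntegrable_rpow' (by linarith)
  refine hrpow.norm.mono_fun ?_ ?_
  · apply Measurable.aestronglyMeasurable
    fun_prop
  · filter_upwards [ae_restrict_mem measurableSet_uIoc] with s hs
    have hst : s ≤ t := by
      rcases Set.mem_uIoc.mp hs with h | h
      · exact h.2.trans hb
      · exact h.2.trans ha
    have he : Real.exp (-(lam * (t - s))) ≤ 1 := by
      apply Real.exp_le_one_iff.mpr; nlinarith
    have he0 : 0 ≤ Real.exp (-(lam * (t - s))) := (Real.exp_pos _).le
    simp only [Real.norm_eq_abs, abs_abs]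
    rw [abs_mul, abs_of_nonneg he0]
    calc |s ^ (mu - 1)| * Real.exp (-(lam * (t - s))) ≤ |s ^ (mu - 1)| * 1 := by
          exact mul_le_mul_of_nonneg_left he (abs_nonneg _)
      _ = |s ^ (mu - 1)| := mul_one _

/-- Key bound: `∫₀^t s^{μ-1} e^{-λ(t-s)} ds ≤ (2/(λμ) + 2/λ) t^{μ-1}` for `t ≥ 1`. -/
lemma aux_key (mu lam t : ℝ) (hmu0 : 0 < mu) (hmu1 : mu < 1) (hlam : 0 < lam) (ht : 1 ≤ t) :
    ∫ s in (0:ℝ)..t, s ^ (mu - 1) * Real.exp (-(lam * (t - s)))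
      ≤ (2 / (lam * mu) + 2 / lam) * t ^ (mu - 1) := by
  have ht0 : (0:ℝ) < t := by linarith
  have hhalf : (0:ℝ) < t / 2 := by linarith
  have hI1 : IntervalIntegrable (fun s => s ^ (mu - 1) * Real.exp (-(lam * (t - s))))
      volume 0 (t / 2) := aux_intInt hmu0 hlam.le (by linarith) (by linarith)
  have hI2 : IntervalIntegrable (fun s => s ^ (mu - 1) * Real.exp (-(lam * (t - s))))
      volume (t / 2) t := aux_intInt hmu0 hlam.le (by linarith) le_rfl
  rw [← intervalIntegral.integral_add_adjacent_intervals hI1 hI2]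
  have hIc1 : IntervalIntegrable (fun s : ℝ => Real.exp (-(lam * (t / 2))) * s ^ (mu - 1))
      volume 0 (t / 2) :=
    (intervalIntegral.intervalIntegrable_rpow' (by linarith)).const_mul _
  have hIc2 : IntervalIntegrable (fun s : ℝ => (t / 2) ^ (mu - 1) * Real.exp (-(lam * (t - s))))
      volume (t / 2) t := by
    apply Continuous.intervalIntegrable
    fun_prop
  -- piece 1
  have hb1 : (∫ s in (0:ℝ)..(t / 2), s ^ (mu - 1) * Real.exp (-(lam * (t - s))))
      ≤ Real.exp (-(lam * (t / 2))) * ((t / 2) ^ mu / mu) := by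
    have hmono : (∫ s in (0:ℝ)..(t / 2), s ^ (mu - 1) * Real.exp (-(lam * (t - s))))
        ≤ ∫ s in (0:ℝ)..(t / 2), Real.exp (-(lam * (t / 2))) * s ^ (mu - 1) := by
      apply intervalIntegral.integral_mono_on (by linarith) hI1 hIc1
      intro s hs
      rw [mul_comm (Real.exp (-(lam * (t / 2))))]
      apply mul_le_mul_of_nonneg_left _ (Real.rpow_nonneg hs.1 _)
      exact Real.exp_le_exp.mpr (by nlinarith [hs.2])
    have hval : (∫ s in (0:ℝ)..(t / 2), Real.exp (-(lam * (t / 2))) * s ^ (mu - 1))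
        = Real.exp (-(lam * (t / 2))) * ((t / 2) ^ mu / mu) := by
      rw [intervalIntegral.integral_const_mul, integral_rpow (Or.inl (by linarith))]
      have h1 : mu - 1 + 1 = mu := by ring
      rw [h1, Real.zero_rpow hmu0.ne']
      ring
    linarith
  -- piece 2
  have hb2 : (∫ s in (t / 2)..t, s ^ (mu - 1) * Real.exp (-(lam * (t - s))))
      ≤ (t / 2) ^ (mu - 1) * (1 / lam) := by
    have hmono : (∫ s in (t / 2)..t, s ^ (mu - 1) * Real.exp (-(lam * (t - s))))
        ≤ ∫ s in (t / 2)..t, (t / 2) ^ (mu - 1) * Real.exp (-(lam * (t - s))) := by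
      apply intervalIntegral.integral_mono_on (by linarith) hI2 hIc2
      intro s hs
      apply mul_le_mul_of_nonneg_right _ (Real.exp_pos _).le
      exact Real.rpow_le_rpow_of_nonpos hhalf hs.1 (by linarith)
    rw [intervalIntegral.integral_const_mul] at hmono
    refine hmono.trans ?_
    exact mul_le_mul_of_nonneg_left (aux_exp_integral_le hlam (by linarith) le_rfl)
      (Real.rpow_nonneg hhalf.le _)
  -- arithmetic
  have hexp : Real.exp (-(lam * (t / 2))) ≤ 2 / (lam * t) := by
    rw [Real.exp_neg]
    have h1 : lam * (t / 2) ≤ Real.exp (lam * (t / 2)) := by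
      nlinarith [Real.add_one_le_exp (lam * (t / 2))]
    have h2 : (Real.exp (lam * (t / 2)))⁻¹ ≤ (lam * (t / 2))⁻¹ := by
      apply inv_anti₀ (by positivity) h1
    refine h2.trans_eq ?_
    field_simp
  have hmul : t ^ mu = t * t ^ (mu - 1) := by
    rw [show mu = 1 + (mu - 1) by ring, Real.rpow_add ht0, Real.rpow_one]
    ring_nf
  have htmu : (t / 2) ^ mu ≤ t ^ mu := Real.rpow_le_rpow (by positivity) (by linarith) hmu0.le
  have hhalfpow : (t / 2) ^ (mu - 1) ≤ 2 * t ^ (mu - 1) := by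
    have hd : (t / 2) ^ (mu - 1) = t ^ (mu - 1) / 2 ^ (mu - 1) :=
      Real.div_rpow ht0.le (by norm_num : (0:ℝ) ≤ 2) (mu - 1)
    have h2 : (1:ℝ) / 2 ≤ 2 ^ (mu - 1) := by
      have := Real.rpow_le_rpow_of_exponent_le (by norm_num : (1:ℝ) ≤ 2)
        (by linarith : (-1:ℝ) ≤ mu - 1)
      rwa [Real.rpow_neg_one, show ((2:ℝ))⁻¹ = 1 / 2 by norm_num] at this
    have hp : (0:ℝ) < t ^ (mu - 1) := Real.rpow_pos_of_pos ht0 _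
    rw [hd]
    calc t ^ (mu - 1) / 2 ^ (mu - 1) ≤ t ^ (mu - 1) / (1 / 2) :=
          div_le_div_of_nonneg_left hp.le (by norm_num) h2
      _ = 2 * t ^ (mu - 1) := by ring
  have hterm1 : Real.exp (-(lam * (t / 2))) * ((t / 2) ^ mu / mu)
      ≤ 2 / (lam * mu) * t ^ (mu - 1) := by
    have hA : Real.exp (-(lam * (t / 2))) * ((t / 2) ^ mu / mu)
        ≤ (2 / (lam * t)) * (t ^ mu / mu) := by
      apply mul_le_mul hexp (by gcongr) (by positivity) (by positivity)
    refine hA.trans_eq ?_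
    rw [hmul]
    field_simp
  have hterm2 : (t / 2) ^ (mu - 1) * (1 / lam) ≤ 2 / lam * t ^ (mu - 1) := by
    calc (t / 2) ^ (mu - 1) * (1 / lam) ≤ (2 * t ^ (mu - 1)) * (1 / lam) :=
          mul_le_mul_of_nonneg_right hhalfpow (by positivity)
      _ = 2 / lam * t ^ (mu - 1) := by ring
  nlinarith [hb1, hb2, hterm1, hterm2]
theorem drift_integral_projection_approximation
    (d : ℕ) (hd : 1 ≤ d) (mu lam C1 M : ℝ)
    (hmu0 : 0 < mu) (hmu1 : mu < 1) (hlam : 0 < lam) (hC1 : 0 ≤ C1) (hM : 0 ≤ M)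
    (P : EuclideanSpace ℝ (Fin d) →L[ℝ] EuclideanSpace ℝ (Fin d))
    (a : ℝ → ℝ) (ha : ∀ t > (0:ℝ), 0 ≤ a t)
    (Φ : ℝ → ℝ → (EuclideanSpace ℝ (Fin d) →L[ℝ] EuclideanSpace ℝ (Fin d)))
    (hΦmeas : ∀ t, StronglyMeasurable fun s => Φ t s)
    (hΦ : ∀ t s : ℝ, 0 ≤ s → s ≤ t →
      ‖Φ t s - P‖ ≤ C1 * Real.exp (-(lam * (t - s))) + a t)
    (u : ℝ → EuclideanSpace ℝ (Fin d)) (humeas : StronglyMeasurable u)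
    (hu : ∀ s, ‖u s‖ ≤ M) :
    ∃ C > 0, ∀ t ≥ (1:ℝ),
      ‖(∫ s in (0:ℝ)..t, s ^ (mu - 1) • (Φ t s) (u s)) -
          P (∫ s in (0:ℝ)..t, s ^ (mu - 1) • u s)‖
        ≤ C * (t ^ (mu - 1) + t ^ mu * a t) := by
  set K := 2 / (lam * mu) + 2 / lam with hK
  clear_value K
  have hKpos : 0 < K := by rw [hK]; positivity
  refine ⟨M * C1 * K + M / mu + 1, by positivity, fun t ht => ?_⟩
  have ht0 : (0:ℝ) < t := by linarith
  have hat : 0 ≤ a t := ha t ht0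
  have huIoc : Set.uIoc (0:ℝ) t = Set.Ioc 0 t := Set.uIoc_of_le ht0.le
  -- measurability
  have hsm_pow : StronglyMeasurable (fun s : ℝ => s ^ (mu - 1)) :=
    (by fun_prop : Measurable (fun s : ℝ => s ^ (mu - 1))).stronglyMeasurable
  have hsm_Phi_u : StronglyMeasurable (fun s => (Φ t s) (u s)) :=
    isBoundedBilinearMap_apply.continuous.comp_stronglyMeasurable
      ((hΦmeas t).prodMk humeas)
  have hsm_f1 : StronglyMeasurable (fun s => s ^ (mu - 1) • (Φ t s) (u s)) :=
    hsm_pow.smul hsm_Phi_u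
  have hsm_f2 : StronglyMeasurable (fun s => s ^ (mu - 1) • u s) := hsm_pow.smul humeas
  have hsm_fP : StronglyMeasurable (fun s => s ^ (mu - 1) • P (u s)) :=
    hsm_pow.smul (P.continuous.comp_stronglyMeasurable humeas)
  -- integrability
  have hrpow : IntervalIntegrable (fun s : ℝ => s ^ (mu - 1)) volume 0 t :=
    intervalIntegral.intervalIntegrable_rpow' (by linarith)
  have hbound : ∀ (B : ℝ), 0 ≤ B → ∀ (v : ℝ → EuclideanSpace ℝ (Fin d)),
      StronglyMeasurable (fun s => s ^ (mu - 1) • v s) →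
      (∀ s ∈ Set.Ioc (0:ℝ) t, ‖v s‖ ≤ B) →
      IntervalIntegrable (fun s => s ^ (mu - 1) • v s) volume 0 t := by
    intro B hB v hsm hv
    refine ((hrpow.norm.const_mul B)).mono_fun hsm.aestronglyMeasurable ?_
    filter_upwards [ae_restrict_mem measurableSet_uIoc] with s hs
    rw [huIoc] at hs
    have h0 : 0 ≤ s ^ (mu - 1) := Real.rpow_nonneg hs.1.le _
    simp only [norm_smul, Real.norm_eq_abs, abs_mul, abs_abs]
    rw [abs_of_nonneg h0]
    nlinarith [hv s hs, norm_nonneg (v s), le_abs_self B, abs_nonneg B]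
  have hB1 : ∀ s ∈ Set.Ioc (0:ℝ) t, ‖(Φ t s) (u s)‖ ≤ (C1 + a t + ‖P‖) * M := by
    intro s hs
    have h1 : ‖Φ t s‖ ≤ C1 + a t + ‖P‖ := by
      have h2 := hΦ t s hs.1.le hs.2
      have h3 : Real.exp (-(lam * (t - s))) ≤ 1 :=
        Real.exp_le_one_iff.mpr (by nlinarith [hs.2])
      have h4 : ‖Φ t s‖ ≤ ‖Φ t s - P‖ + ‖P‖ := by
        calc ‖Φ t s‖ = ‖(Φ t s - P) + P‖ := by rw [sub_add_cancel]
          _ ≤ ‖Φ t s - P‖ + ‖P‖ := norm_add_le _ _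
      nlinarith [Real.exp_pos (-(lam * (t - s)))]
    calc ‖(Φ t s) (u s)‖ ≤ ‖Φ t s‖ * ‖u s‖ := (Φ t s).le_opNorm _
      _ ≤ (C1 + a t + ‖P‖) * M := mul_le_mul h1 (hu s) (norm_nonneg _)
          (by positivity)
  have hInt1 : IntervalIntegrable (fun s => s ^ (mu - 1) • (Φ t s) (u s)) volume 0 t :=
    hbound _ (by positivity) _ hsm_f1 hB1
  have hInt2 : IntervalIntegrable (fun s => s ^ (mu - 1) • u s) volume 0 t :=
    hbound M hM _ hsm_f2 (fun s _ => hu s)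
  have hIntP : IntervalIntegrable (fun s => s ^ (mu - 1) • P (u s)) volume 0 t :=
    hbound (‖P‖ * M) (by positivity) _ hsm_fP (fun s _ =>
      ((P.le_opNorm _).trans (mul_le_mul_of_nonneg_left (hu s) (norm_nonneg _))))
  -- move P inside the integral
  have hP : P (∫ s in (0:ℝ)..t, s ^ (mu - 1) • u s)
      = ∫ s in (0:ℝ)..t, s ^ (mu - 1) • P (u s) := by
    rw [← P.intervalIntegral_comp_comm hInt2]
    apply intervalIntegral.integral_congr
    intro s _
    simp [P.map_smul]
  have hsplit : (∫ s in (0:ℝ)..t, s ^ (mu - 1) • (Φ t s) (u s)) -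
      P (∫ s in (0:ℝ)..t, s ^ (mu - 1) • u s)
      = ∫ s in (0:ℝ)..t, s ^ (mu - 1) • ((Φ t s - P) (u s)) := by
    rw [hP, ← intervalIntegral.integral_sub hInt1 hIntP]
    apply intervalIntegral.integral_congr
    intro s _
    simp [smul_sub, ContinuousLinearMap.sub_apply]
  rw [hsplit]
  -- the dominating function
  set g : ℝ → ℝ := fun s => (M * C1) * (s ^ (mu - 1) * Real.exp (-(lam * (t - s))))
    + (M * a t) * s ^ (mu - 1) with hg
  have hgI1 : IntervalIntegrable
      (fun s => s ^ (mu - 1) * Real.exp (-(lam * (t - s)))) volume 0 t :=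
    aux_intInt hmu0 hlam.le (by linarith) le_rfl
  have hgInt : IntervalIntegrable g volume 0 t :=
    (hgI1.const_mul (M * C1)).add (hrpow.const_mul (M * a t))
  have hnorm : ‖∫ s in (0:ℝ)..t, s ^ (mu - 1) • ((Φ t s - P) (u s))‖
      ≤ |∫ s in (0:ℝ)..t, g s| := by
    apply intervalIntegral.norm_integral_le_abs_of_norm_le _ hgInt
    filter_upwards [ae_restrict_mem measurableSet_uIoc] with s hs
    rw [huIoc] at hs
    have h0 : 0 ≤ s ^ (mu - 1) := Real.rpow_nonneg hs.1.le _
    have h1 : ‖(Φ t s - P) (u s)‖ ≤ (C1 * Real.exp (-(lam * (t - s))) + a t) * M := by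
      calc ‖(Φ t s - P) (u s)‖ ≤ ‖Φ t s - P‖ * ‖u s‖ := (Φ t s - P).le_opNorm _
        _ ≤ (C1 * Real.exp (-(lam * (t - s))) + a t) * M :=
            mul_le_mul (hΦ t s hs.1.le hs.2) (hu s) (norm_nonneg _)
              (by positivity)
    rw [norm_smul, Real.norm_eq_abs, abs_of_nonneg h0]
    calc s ^ (mu - 1) * ‖(Φ t s - P) (u s)‖
        ≤ s ^ (mu - 1) * ((C1 * Real.exp (-(lam * (t - s))) + a t) * M) :=
          mul_le_mul_of_nonneg_left h1 h0
      _ = g s := by rw [hg]; ring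
  refine hnorm.trans ?_
  -- compute the integral of g
  set E : ℝ := ∫ s in (0:ℝ)..t, s ^ (mu - 1) * Real.exp (-(lam * (t - s))) with hE
  have hEnn : 0 ≤ E := by
    rw [hE]
    apply intervalIntegral.integral_nonneg ht0.le
    intro s hs
    exact mul_nonneg (Real.rpow_nonneg hs.1 _) (Real.exp_pos _).le
  have hEK : E ≤ K * t ^ (mu - 1) := by rw [hK]; exact aux_key mu lam t hmu0 hmu1 hlam ht
  have hrint : (∫ s in (0:ℝ)..t, s ^ (mu - 1)) = t ^ mu / mu := by
    rw [integral_rpow (Or.inl (by linarith))]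
    have h1 : mu - 1 + 1 = mu := by ring
    rw [h1, Real.zero_rpow hmu0.ne']
    ring
  have hgval : (∫ s in (0:ℝ)..t, g s) = (M * C1) * E + (M * a t) * (t ^ mu / mu) := by
    rw [hg, intervalIntegral.integral_add (hgI1.const_mul _) (hrpow.const_mul _),
      intervalIntegral.integral_const_mul, intervalIntegral.integral_const_mul,
      hrint, hE]
  have htpow0 : 0 ≤ t ^ (mu - 1) := Real.rpow_nonneg ht0.le _
  have htpowmu : 0 ≤ t ^ mu := Real.rpow_nonneg ht0.le _
  have hgnn : 0 ≤ (∫ s in (0:ℝ)..t, g s) := by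
    rw [hgval]
    have : 0 ≤ t ^ mu / mu := by positivity
    positivity
  rw [hgval, abs_of_nonneg (hgval ▸ hgnn)]
  have e1 : (M * C1) * E ≤ (M * C1 * K) * t ^ (mu - 1) := by
    calc (M * C1) * E ≤ (M * C1) * (K * t ^ (mu - 1)) :=
          mul_le_mul_of_nonneg_left hEK (by positivity)
      _ = (M * C1 * K) * t ^ (mu - 1) := by ring
  have e2 : (M * a t) * (t ^ mu / mu) = (M / mu) * (t ^ mu * a t) := by ring
  have hx1 : 0 ≤ M / mu := by positivity
  have hx2 : 0 ≤ M * C1 * K := by positivity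
  have hle1 : M * C1 * K ≤ M * C1 * K + M / mu + 1 := by linarith
  have hle2 : M / mu ≤ M * C1 * K + M / mu + 1 := by linarith
  have hnn2 : 0 ≤ t ^ mu * a t := mul_nonneg htpowmu hat
  calc (M * C1) * E + (M * a t) * (t ^ mu / mu)
      ≤ (M * C1 * K) * t ^ (mu - 1) + (M / mu) * (t ^ mu * a t) := by
        rw [e2]; exact add_le_add e1 (le_refl _)
    _ ≤ (M * C1 * K + M / mu + 1) * t ^ (mu - 1)
        + (M * C1 * K + M / mu + 1) * (t ^ mu * a t) :=
        add_le_add (mul_le_mul_of_nonneg_right hle1 htpow0)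
          (mul_le_mul_of_nonneg_right hle2 hnn2)
    _ = (M * C1 * K + M / mu + 1) * (t ^ (mu - 1) + t ^ mu * a t) := by ring
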